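/- Let (M,g) be a Riemannian manifold, f a skew-symmetric (1,1)-tensor, ∇ a connection with difference tensor K, and define div_f X := Σ_i g(∇^g_{f e_i} X + K_{e_i} X, e_i) for an orthonormal frame {e_i}. Then div_f X = div_g(fX) − (div_g f)(X) + g(X, E*), where E* = Σ_i K*_{e_i} e_i and div_g f is the divergence of the (1,1)-tensor f. Consequently, div_f X = div_g(fX) for all X if and only if (div_g f)^♯ = E*. -/
import Mathlib

open scoped RealInnerProductSpace

lemma trace_comm_aux {V ι : Type*} [NormedAddCommGroup V] [InnerProductSpace ℝ V] [Fintype ι]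
    (b : OrthonormalBasis ι ℝ V) (A B : V →ₗ[ℝ] V) :
    (∑ i, ⟪A (B (b i)), b i⟫) = ∑ i, ⟪B (A (b i)), b i⟫ := by
  have key : ∀ (C D : V →ₗ[ℝ] V) (i : ι),
      ⟪C (D (b i)), b i⟫ = ∑ j, ⟪b j, D (b i)⟫ * ⟪C (b j), b i⟫ := by
    intro C D i
    conv_lhs => rw [← b.sum_repr (D (b i))]
    simp [map_sum, LinearMap.map_smul, b.repr_apply_apply, sum_inner,
      real_inner_smul_left]
  calc (∑ i, ⟪A (B (b i)), b i⟫)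
      = ∑ i, ∑ j, ⟪b j, B (b i)⟫ * ⟪A (b j), b i⟫ := by simp [key]
    _ = ∑ j, ∑ i, ⟪b i, A (b j)⟫ * ⟪B (b i), b j⟫ := by
        rw [Finset.sum_comm]
        refine Finset.sum_congr rfl fun j _ => Finset.sum_congr rfl fun i _ => ?_
        rw [real_inner_comm (b j) (B (b i)), real_inner_comm (b i) (A (b j))]
        ring
    _ = ∑ j, ⟪B (A (b j)), b j⟫ := by simp [key]

theorem stmt_8 {V ι : Type*} [NormedAddCommGroup V] [InnerProductSpace ℝ V] [Fintype ι]
    (b : OrthonormalBasis ι ℝ V)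
    (f : V →ₗ[ℝ] V) (hf : ∀ x y : V, ⟪f x, y⟫ = - ⟪x, f y⟫)
    (K Kstar : V → V → V)
    (hstar : ∀ X Y Z : V, ⟪Kstar X Y, Z⟫ = ⟪Y, K X Z⟫)
    (Df : V →ₗ[ℝ] V →ₗ[ℝ] V)  -- (v, x) ↦ (∇^g_v f)(x)
    :
    (∀ (x : V) (DX : V →ₗ[ℝ] V),
      -- div_f X = div_g(fX) − (div_g f)(X) + g(X, E*)
      (∑ i, ⟪DX (f (b i)) + K (b i) x, b i⟫)
        = (∑ i, ⟪Df (b i) x + f (DX (b i)), b i⟫)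
          - (∑ i, ⟪Df (b i) x, b i⟫)
          + ⟪x, ∑ i, Kstar (b i) (b i)⟫) ∧
    ((∀ (x : V) (DX : V →ₗ[ℝ] V),
        (∑ i, ⟪DX (f (b i)) + K (b i) x, b i⟫)
          = ∑ i, ⟪Df (b i) x + f (DX (b i)), b i⟫)
      ↔ (∀ x : V, (∑ i, ⟪Df (b i) x, b i⟫) = ⟪x, ∑ i, Kstar (b i) (b i)⟫)) := by
  have hK : ∀ x : V, (∑ i, ⟪K (b i) x, b i⟫) = ⟪x, ∑ i, Kstar (b i) (b i)⟫ := by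
    intro x
    rw [inner_sum]
    refine Finset.sum_congr rfl fun i _ => ?_
    have h1 := hstar (b i) (b i) x
    have h2 := real_inner_comm (K (b i) x) (b i)
    have h3 := real_inner_comm x (Kstar (b i) (b i))
    linarith
  have hmain : ∀ (x : V) (DX : V →ₗ[ℝ] V),
      (∑ i, ⟪DX (f (b i)) + K (b i) x, b i⟫)
        = (∑ i, ⟪Df (b i) x + f (DX (b i)), b i⟫)
          - (∑ i, ⟪Df (b i) x, b i⟫)
          + ⟪x, ∑ i, Kstar (b i) (b i)⟫ := by
    intro x DX
    simp only [inner_add_left, Finset.sum_add_distrib]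
    rw [trace_comm_aux b DX f, hK]
    ring
  refine ⟨hmain, ?_⟩
  constructor
  · intro h x
    have h0 := h x 0
    simp only [LinearMap.zero_apply, zero_add, map_zero, add_zero] at h0
    rw [hK] at h0
    exact h0.symm
  · intro h x DX
    rw [hmain x DX, h x]
    ring
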